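/- Let φ be a satisfiable 3-CNF formula with m clauses over n Boolean variables, and let Q(φ)(x, a) = ∑_{k=1}^m Q(l_{k,1}(x), l_{k,2}(x), l_{k,3}(x), a_k) be its total encoding over (x, a) ∈ {0,1}^n × {0,1}^m. Then an assignment x ∈ {0,1}^n satisfies φ if and only if there exists a ∈ {0,1}^m with Q(φ)(x, a) = 0; consequently, the projection onto the x-coordinates of the set of global minimizers of Q(φ) is exactly the set of satisfying assignments of φ. -/
import Mathlib


/-- The clause-encoding function
`Q(x1,x2,x3,xc) = xc·(2 − (x1+x2+x3)) + (x1·x2 + x2·x3 + x3·x1) − (x1+x2+x3) + 1`. -/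
def clauseQ (x1 x2 x3 xc : ℤ) : ℤ :=
  xc * (2 - (x1 + x2 + x3)) + (x1 * x2 + x2 * x3 + x3 * x1) - (x1 + x2 + x3) + 1

/-- A vector is Boolean when every coordinate is 0 or 1. -/
def BoolVec {n : ℕ} (x : Fin n → ℤ) : Prop := ∀ i, x i = 0 ∨ x i = 1

/-- A literal over `n` variables: a variable index together with a polarity
(`true` = positive literal, `false` = negated literal). -/
abbrev Literal (n : ℕ) := Fin n × Bool

/-- The value of a literal under an assignment: the coordinate `x j` for a positive
literal, and the Boolean negation `1 - x j` for a negated literal. -/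
def litVal {n : ℕ} (l : Literal n) (x : Fin n → ℤ) : ℤ :=
  if l.2 then x l.1 else 1 - x l.1

/-- A 3-SAT clause: a triple of literals. -/
abbrev Clause3 (n : ℕ) := Literal n × Literal n × Literal n

/-- A clause is satisfied exactly when at least one of its literal values equals 1. -/
def clauseSat {n : ℕ} (c : Clause3 n) (x : Fin n → ℤ) : Prop :=
  litVal c.1 x = 1 ∨ litVal c.2.1 x = 1 ∨ litVal c.2.2 x = 1

instance {n : ℕ} (c : Clause3 n) (x : Fin n → ℤ) : Decidable (clauseSat c x) := by
  unfold clauseSat; infer_instance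

/-- An assignment satisfies a 3-CNF formula when it satisfies every clause. -/
def SatCNF {n m : ℕ} (φ : Fin m → Clause3 n) (x : Fin n → ℤ) : Prop :=
  ∀ k, clauseSat (φ k) x

/-- The total encoding `Q(φ)(x, a) = ∑ₖ Q(l_{k,1}(x), l_{k,2}(x), l_{k,3}(x), aₖ)`. -/
def Qtot {n m : ℕ} (φ : Fin m → Clause3 n) (x : Fin n → ℤ) (a : Fin m → ℤ) : ℤ :=
  ∑ k, clauseQ (litVal (φ k).1 x) (litVal (φ k).2.1 x) (litVal (φ k).2.2 x) (a k)

/-- A global minimizer of `Q(φ)` over `{0,1}^n × {0,1}^m`. -/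
def GlobalMin {n m : ℕ} (φ : Fin m → Clause3 n) (x : Fin n → ℤ) (a : Fin m → ℤ) : Prop :=
  BoolVec x ∧ BoolVec a ∧
    ∀ (x' : Fin n → ℤ) (a' : Fin m → ℤ), BoolVec x' → BoolVec a' →
      Qtot φ x a ≤ Qtot φ x' a'

lemma litVal_bool {n : ℕ} (l : Literal n) {x : Fin n → ℤ} (hx : BoolVec x) :
    litVal l x = 0 ∨ litVal l x = 1 := by
  unfold litVal
  rcases hx l.1 with h | h <;> rcases l.2 <;> simp [h]

lemma clauseQ_nonneg {x1 x2 x3 xc : ℤ} (h1 : x1 = 0 ∨ x1 = 1) (h2 : x2 = 0 ∨ x2 = 1)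
    (h3 : x3 = 0 ∨ x3 = 1) (hc : xc = 0 ∨ xc = 1) : 0 ≤ clauseQ x1 x2 x3 xc := by
  rcases h1 with rfl | rfl <;> rcases h2 with rfl | rfl <;> rcases h3 with rfl | rfl <;>
    rcases hc with rfl | rfl <;> norm_num [clauseQ]

lemma clauseQ_zero_iff {x1 x2 x3 xc : ℤ} (h1 : x1 = 0 ∨ x1 = 1) (h2 : x2 = 0 ∨ x2 = 1)
    (h3 : x3 = 0 ∨ x3 = 1) (hc : xc = 0 ∨ xc = 1) :
    clauseQ x1 x2 x3 xc = 0 → (x1 = 1 ∨ x2 = 1 ∨ x3 = 1) := by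
  rcases h1 with rfl | rfl <;> rcases h2 with rfl | rfl <;> rcases h3 with rfl | rfl <;>
    rcases hc with rfl | rfl <;> norm_num [clauseQ]

lemma clauseQ_exists_zero {x1 x2 x3 : ℤ} (h1 : x1 = 0 ∨ x1 = 1) (h2 : x2 = 0 ∨ x2 = 1)
    (h3 : x3 = 0 ∨ x3 = 1) (hs : x1 = 1 ∨ x2 = 1 ∨ x3 = 1) :
    ∃ xc : ℤ, (xc = 0 ∨ xc = 1) ∧ clauseQ x1 x2 x3 xc = 0 := by
  rcases h1 with rfl | rfl <;> rcases h2 with rfl | rfl <;> rcases h3 with rfl | rfl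
  · exact absurd hs (by norm_num)
  · exact ⟨0, Or.inl rfl, by norm_num [clauseQ]⟩
  · exact ⟨0, Or.inl rfl, by norm_num [clauseQ]⟩
  · exact ⟨1, Or.inr rfl, by norm_num [clauseQ]⟩
  · exact ⟨0, Or.inl rfl, by norm_num [clauseQ]⟩
  · exact ⟨1, Or.inr rfl, by norm_num [clauseQ]⟩
  · exact ⟨1, Or.inr rfl, by norm_num [clauseQ]⟩
  · exact ⟨1, Or.inr rfl, by norm_num [clauseQ]⟩

lemma Qtot_nonneg {n m : ℕ} (φ : Fin m → Clause3 n) {x : Fin n → ℤ} {a : Fin m → ℤ}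
    (hx : BoolVec x) (ha : BoolVec a) : 0 ≤ Qtot φ x a :=
  Finset.sum_nonneg fun k _ =>
    clauseQ_nonneg (litVal_bool _ hx) (litVal_bool _ hx) (litVal_bool _ hx) (ha k)

lemma sat_iff_exists {n m : ℕ} (φ : Fin m → Clause3 n) (x : Fin n → ℤ) (hx : BoolVec x) :
    SatCNF φ x ↔ ∃ a : Fin m → ℤ, BoolVec a ∧ Qtot φ x a = 0 := by
  constructor
  · intro hs
    choose a ha h0 using fun k =>
      clauseQ_exists_zero (litVal_bool (φ k).1 hx) (litVal_bool (φ k).2.1 hx)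
        (litVal_bool (φ k).2.2 hx) (hs k)
    exact ⟨a, ha, Finset.sum_eq_zero fun k _ => h0 k⟩
  · rintro ⟨a, ha, h0⟩ k
    have hterm : ∀ j ∈ Finset.univ,
        clauseQ (litVal (φ j).1 x) (litVal (φ j).2.1 x) (litVal (φ j).2.2 x) (a j) = 0 := by
      rw [← Finset.sum_eq_zero_iff_of_nonneg]
      · exact h0
      · exact fun j _ => clauseQ_nonneg (litVal_bool _ hx) (litVal_bool _ hx)
          (litVal_bool _ hx) (ha j)
    exact clauseQ_zero_iff (litVal_bool _ hx) (litVal_bool _ hx) (litVal_bool _ hx) (ha k)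
      (hterm k (Finset.mem_univ k))

/-- For a satisfiable 3-CNF formula `φ`: a Boolean assignment `x` satisfies `φ` iff some
Boolean auxiliary vector `a` gives `Q(φ)(x, a) = 0`; consequently the projection onto
the `x`-coordinates of the set of global minimizers of `Q(φ)` is exactly the set of
satisfying assignments of `φ`. -/
theorem sat_iff_Qtot_zero_and_projection {n m : ℕ} (φ : Fin m → Clause3 n)
    (hsat : ∃ x : Fin n → ℤ, BoolVec x ∧ SatCNF φ x) :
    (∀ x : Fin n → ℤ, BoolVec x →
      (SatCNF φ x ↔ ∃ a : Fin m → ℤ, BoolVec a ∧ Qtot φ x a = 0)) ∧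
    {x : Fin n → ℤ | ∃ a : Fin m → ℤ, GlobalMin φ x a}
      = {x : Fin n → ℤ | BoolVec x ∧ SatCNF φ x} := by
  obtain ⟨x0, hx0, hs0⟩ := hsat
  obtain ⟨a0, ha0, h00⟩ := (sat_iff_exists φ x0 hx0).mp hs0
  refine ⟨fun x hx => sat_iff_exists φ x hx, ?_⟩
  ext x
  simp only [Set.mem_setOf_eq]
  constructor
  · rintro ⟨a, hx, ha, hmin⟩
    have hle : Qtot φ x a ≤ 0 := h00 ▸ hmin x0 a0 hx0 ha0
    have h0 : Qtot φ x a = 0 := le_antisymm hle (Qtot_nonneg φ hx ha)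
    exact ⟨hx, (sat_iff_exists φ x hx).mpr ⟨a, ha, h0⟩⟩
  · rintro ⟨hx, hs⟩
    obtain ⟨a, ha, h0⟩ := (sat_iff_exists φ x hx).mp hs
    exact ⟨a, hx, ha, fun x' a' hx' ha' => h0 ▸ Qtot_nonneg φ hx' ha'⟩
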